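/- Let k be a field and t, n positive integers; set m := t·n. Let A := k[x,y,u]/⟨x y − u^t⟩ be the quotient of the polynomial ring in three variables over k by the principal ideal generated by x y − u^t, and let I := ⟨y, u⟩ be the ideal of A generated by the classes of y and u. Then I is a prime ideal, and the m-th symbolic power of I equals the principal ideal ⟨y^n⟩; that is, the preimage under the localization map A → A_I of the ideal (I·A_I)^m equals the ideal of A generated by y^n. -/

import Mathlib

set_option maxHeartbeats 1000000
set_option synthInstance.maxHeartbeats 400000

noncomputable section

/-- The ideal `⟨x y − u^t⟩` of `k[x,y,u]` (with `x, y, u` the variables `X 0, X 1, X 2`). -/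
def relId (k : Type) [Field k] (t : ℕ) : Ideal (MvPolynomial (Fin 3) k) :=
  Ideal.span {MvPolynomial.X 0 * MvPolynomial.X 1 - MvPolynomial.X 2 ^ t}

/-- The ring `A = k[x,y,u]/⟨x y − u^t⟩`. -/
abbrev Aring (k : Type) [Field k] (t : ℕ) : Type :=
  MvPolynomial (Fin 3) k ⧸ relId k t

/-- The ideal `I = ⟨y, u⟩` of `A`. -/
def Iyu (k : Type) [Field k] (t : ℕ) : Ideal (Aring k t) :=
  Ideal.span {Ideal.Quotient.mk (relId k t) (MvPolynomial.X 1),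
    Ideal.Quotient.mk (relId k t) (MvPolynomial.X 2)}

namespace SymbAux

instance lauDom (k : Type) [Field k] : IsDomain (LaurentPolynomial k) :=
  NoZeroDivisors.to_isDomain _

variable (k : Type) [Field k] (t : ℕ)

/-- The model ring `B = k[x,x⁻¹][u]`. -/
abbrev B : Type := Polynomial (LaurentPolynomial k)

def vX : B k := Polynomial.C (LaurentPolynomial.T 1)
def vY : B k := Polynomial.C (LaurentPolynomial.T (-1)) * Polynomial.X ^ t
def vU : B k := Polynomial.X

/-- `φ : k[x,y,u] → B`, `x ↦ x`, `y ↦ x⁻¹ u^t`, `u ↦ u`. -/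
def phi : MvPolynomial (Fin 3) k →ₐ[k] B k :=
  MvPolynomial.aeval ![vX k, vY k t, vU k]

lemma phi_gen : phi k t (MvPolynomial.X 0 * MvPolynomial.X 1 - MvPolynomial.X 2 ^ t) = 0 := by
  simp only [phi, map_sub, map_mul, map_pow, MvPolynomial.aeval_X]
  show vX k * vY k t - vU k ^ t = 0
  simp only [vX, vY, vU]
  rw [← mul_assoc, ← Polynomial.C_mul, ← LaurentPolynomial.T_add]
  norm_num [LaurentPolynomial.T_zero]

lemma relId_le_ker : relId k t ≤ RingHom.ker (phi k t).toRingHom := by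
  rw [relId, Ideal.span_le, Set.singleton_subset_iff]
  exact phi_gen k t

/-- The induced map `A → B`. -/
def phiA : Aring k t →+* B k :=
  Ideal.Quotient.lift (relId k t) (phi k t).toRingHom
    (fun a ha => relId_le_ker k t ha)

@[simp] lemma phiA_mk (P : MvPolynomial (Fin 3) k) :
    phiA k t (Ideal.Quotient.mk (relId k t) P) = phi k t P :=
  Ideal.Quotient.lift_mk _ _ _

/-- names for the generators of `A`. -/
def xA : Aring k t := Ideal.Quotient.mk (relId k t) (MvPolynomial.X 0)
def yA : Aring k t := Ideal.Quotient.mk (relId k t) (MvPolynomial.X 1)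
def uA : Aring k t := Ideal.Quotient.mk (relId k t) (MvPolynomial.X 2)

lemma rel_u_pow : uA k t ^ t = xA k t * yA k t := by
  rw [uA, xA, yA, ← map_pow, ← map_mul]
  rw [Ideal.Quotient.eq]
  have h : (MvPolynomial.X 2 : MvPolynomial (Fin 3) k) ^ t
        - MvPolynomial.X 0 * MvPolynomial.X 1
      = -(MvPolynomial.X 0 * MvPolynomial.X 1 - MvPolynomial.X 2 ^ t) := by ring
  rw [h]
  exact neg_mem (Ideal.subset_span rfl)

/-- `k[x,y] → k[x,y,u]`. -/
def psiP : MvPolynomial (Fin 2) k →ₐ[k] MvPolynomial (Fin 3) k :=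
  MvPolynomial.rename Fin.castSucc

/-- `k[x,y] → B`. -/
def chi : MvPolynomial (Fin 2) k →ₐ[k] B k :=
  MvPolynomial.aeval ![vX k, vY k t]

lemma phi_psiP (c : MvPolynomial (Fin 2) k) : phi k t (psiP k c) = chi k t c := by
  rw [psiP, phi, chi, MvPolynomial.aeval_rename]
  have h : (![vX k, vY k t, vU k] ∘ Fin.castSucc) = ![vX k, vY k t] := by
    funext i; fin_cases i <;> rfl
  rw [h]

lemma fin2_decomp (m : Fin 2 →₀ ℕ) :
    m = Finsupp.single 0 (m 0) + Finsupp.single 1 (m 1) := by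
  ext i
  fin_cases i <;> simp [Finsupp.single_apply]

lemma fin2_eq_iff (m : Fin 2 →₀ ℕ) (a b : ℕ) :
    m = Finsupp.single 0 a + Finsupp.single 1 b ↔ m 0 = a ∧ m 1 = b := by
  constructor
  · rintro rfl; simp [Finsupp.single_apply]
  · rintro ⟨h0, h1⟩; rw [fin2_decomp m, h0, h1]

lemma chi_monomial (m : Fin 2 →₀ ℕ) (coef : k) :
    chi k t (MvPolynomial.monomial m coef) =
      Polynomial.C (LaurentPolynomial.C coef * LaurentPolynomial.T ((m 0 : ℤ) - (m 1 : ℤ)))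
        * Polynomial.X ^ (t * m 1) := by
  rw [chi, MvPolynomial.aeval_monomial]
  rw [Finsupp.prod_fintype _ _ (fun i => pow_zero _)]
  rw [Fin.prod_univ_two]
  show (algebraMap k (B k)) coef * (vX k ^ m 0 * vY k t ^ m 1) = _
  rw [vX, vY]
  rw [mul_pow, ← Polynomial.C_pow, ← Polynomial.C_pow, ← pow_mul,
    LaurentPolynomial.T_pow, LaurentPolynomial.T_pow]
  rw [Polynomial.algebraMap_apply, LaurentPolynomial.algebraMap_apply]
  rw [← mul_assoc, ← mul_assoc, ← Polynomial.C_mul, ← Polynomial.C_mul, mul_assoc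
    (LaurentPolynomial.C _), ← LaurentPolynomial.T_add]
  congr 3
  push_cast; ring

lemma ext_chi_mul (a b i i' : ℕ) (hi : i < t) (hi' : i' < t) (c : MvPolynomial (Fin 2) k) :
    ((chi k t c * Polynomial.X ^ i').coeff (t * b + i)).coeff ((a : ℤ) - b) =
      if i' = i then MvPolynomial.coeff (Finsupp.single 0 a + Finsupp.single 1 b) c else 0 := by
  induction c using MvPolynomial.induction_on' with
  | add p q hp hq =>
    rw [map_add, add_mul, Polynomial.coeff_add, AddMonoidAlgebra.coeff_add, Finsupp.add_apply, hp, hq,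
      MvPolynomial.coeff_add]
    split_ifs <;> simp
  | monomial m coef =>
    have ht : 0 < t := Nat.lt_of_le_of_lt (Nat.zero_le i) hi
    rw [chi_monomial, mul_assoc, ← pow_add, Polynomial.coeff_C_mul, Polynomial.coeff_X_pow]
    by_cases h : t * b + i = t * m 1 + i'
    · have hi'i : i' = i := by
        have h2 := congrArg (· % t) h
        exact (by simpa [Nat.mul_add_mod, Nat.mod_eq_of_lt hi, Nat.mod_eq_of_lt hi'] using
          h2 : i = i').symm
      have hmb : m 1 = b := by
        rw [hi'i] at h
        have h' : t * b = t * m 1 := by omega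
        exact (Nat.eq_of_mul_eq_mul_left ht h').symm
      rw [if_pos h, mul_one, ← LaurentPolynomial.single_eq_C_mul_T, AddMonoidAlgebra.coeff_single, Finsupp.single_apply,
        MvPolynomial.coeff_monomial, if_pos hi'i]
      by_cases hma : m 0 = a
      · rw [if_pos (by push_cast [hmb, hma]; ring), if_pos ((fin2_eq_iff m a b).mpr ⟨hma, hmb⟩)]
      · rw [if_neg (by push_cast [hmb]; omega),
          if_neg (fun hc => hma ((fin2_eq_iff m a b).mp hc).1)]
    · rw [if_neg h, mul_zero, AddMonoidAlgebra.coeff_zero, Finsupp.zero_apply]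
      split_ifs with h1
      · rw [MvPolynomial.coeff_monomial, if_neg]
        intro hc
        exact h (by rw [((fin2_eq_iff m a b).mp hc).2, h1])
      · rfl

/-! ### normal forms -/

def NF (z : Aring k t) (c : ℕ → MvPolynomial (Fin 2) k) : Prop :=
  z = ∑ i ∈ Finset.range t, Ideal.Quotient.mk (relId k t) (psiP k (c i)) * uA k t ^ i

variable {k t}

lemma exists_NF (ht : 0 < t) (z : Aring k t) : ∃ c, NF k t z c := by
  obtain ⟨P, rfl⟩ := Ideal.Quotient.mk_surjective z
  induction P using MvPolynomial.induction_on with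
  | C a =>
    refine ⟨fun i => if i = 0 then MvPolynomial.C a else 0, ?_⟩
    rw [NF, Finset.sum_eq_single_of_mem 0 (Finset.mem_range.mpr ht)]
    · simp [psiP]
    · intro i _ hi
      simp [hi]
  | add p q hp hq =>
    obtain ⟨c1, hc1⟩ := hp
    obtain ⟨c2, hc2⟩ := hq
    refine ⟨fun i => c1 i + c2 i, ?_⟩
    rw [NF, map_add (Ideal.Quotient.mk (relId k t)), hc1, hc2, ← Finset.sum_add_distrib]
    refine Finset.sum_congr rfl fun i _ => ?_
    rw [map_add (psiP k), map_add (Ideal.Quotient.mk (relId k t)), add_mul]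
  | mul_X p j hp =>
    obtain ⟨c, hc⟩ := hp
    rw [map_mul (Ideal.Quotient.mk (relId k t))]
    fin_cases j
    · rw [show (⟨0, by omega⟩ : Fin 3) = 0 from rfl]
      refine ⟨fun i => MvPolynomial.X 0 * c i, ?_⟩
      rw [NF, hc, Finset.sum_mul]
      refine Finset.sum_congr rfl fun i _ => ?_
      have hps : psiP k (MvPolynomial.X 0 * c i)
          = MvPolynomial.X 0 * psiP k (c i) := by
        rw [map_mul, psiP, MvPolynomial.rename_X]
        rfl
      rw [hps, map_mul (Ideal.Quotient.mk (relId k t))]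
      ring
    · rw [show (⟨1, by omega⟩ : Fin 3) = 1 from rfl]
      refine ⟨fun i => MvPolynomial.X 1 * c i, ?_⟩
      rw [NF, hc, Finset.sum_mul]
      refine Finset.sum_congr rfl fun i _ => ?_
      have hps : psiP k (MvPolynomial.X 1 * c i)
          = MvPolynomial.X 1 * psiP k (c i) := by
        rw [map_mul, psiP, MvPolynomial.rename_X]
        rfl
      rw [hps, map_mul (Ideal.Quotient.mk (relId k t))]
      ring
    · rw [show (⟨2, by omega⟩ : Fin 3) = 2 from rfl]
      refine ⟨fun i => if i = 0 then MvPolynomial.X 0 * MvPolynomial.X 1 * c (t-1)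
        else c (i-1), ?_⟩
      rw [NF, hc, Finset.sum_mul]
      obtain ⟨t', rfl⟩ : ∃ t', t = t' + 1 := ⟨t - 1, by omega⟩
      have hu : (Ideal.Quotient.mk (relId k (t'+1))) (MvPolynomial.X 2) = uA k (t'+1) := rfl
      rw [hu]
      conv_lhs => rw [Finset.sum_range_succ]
      conv_rhs => rw [Finset.sum_range_succ']
      congr 1
      · refine Finset.sum_congr rfl fun i _ => ?_
        rw [if_neg (Nat.succ_ne_zero i), Nat.add_sub_cancel, pow_succ]
        ring
      · rw [if_pos rfl, pow_zero, mul_one, Nat.add_sub_cancel]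
        have hps : psiP k (MvPolynomial.X 0 * MvPolynomial.X 1 * c t')
            = MvPolynomial.X 0 * MvPolynomial.X 1 * psiP k (c t') := by
          rw [map_mul, map_mul, psiP, MvPolynomial.rename_X, MvPolynomial.rename_X]
          rfl
        have hrel := rel_u_pow k (t'+1)
        rw [xA, yA] at hrel
        rw [hps, map_mul (Ideal.Quotient.mk (relId k (t'+1))),
          map_mul (Ideal.Quotient.mk (relId k (t'+1))), ← hrel, pow_succ]
        ring

lemma coeff_phiA {z : Aring k t} {c : ℕ → MvPolynomial (Fin 2) k} (hc : NF k t z c)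
    (a b i : ℕ) (hi : i < t) :
    ((phiA k t z).coeff (t * b + i)).coeff ((a : ℤ) - b) =
      MvPolynomial.coeff (Finsupp.single 0 a + Finsupp.single 1 b) (c i) := by
  rw [hc, map_sum]
  have : ∀ i' ∈ Finset.range t,
      phiA k t (Ideal.Quotient.mk (relId k t) (psiP k (c i')) * uA k t ^ i')
        = chi k t (c i') * Polynomial.X ^ i' := by
    intro i' _
    rw [map_mul, map_pow, phiA_mk, phi_psiP, uA, phiA_mk]
    simp [phi, vU, MvPolynomial.aeval_X]
  rw [Finset.sum_congr rfl this, Polynomial.finset_sum_coeff, AddMonoidAlgebra.coeff_sum, Finsupp.finset_sum_apply]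
  rw [Finset.sum_congr rfl (fun i' hi' =>
    ext_chi_mul k t a b i i' hi (Finset.mem_range.mp hi') (c i'))]
  rw [Finset.sum_ite_eq' (Finset.range t) i fun i' =>
    MvPolynomial.coeff (Finsupp.single 0 a + Finsupp.single 1 b) (c i')]
  rw [if_pos (Finset.mem_range.mpr hi)]

/-! ### `I` as preimage of `(X)` -/

lemma Iyu_le_comap (ht : 0 < t) :
    Iyu k t ≤ Ideal.comap (phiA k t) (Ideal.span {(Polynomial.X : B k)}) := by
  rw [Iyu, Ideal.span_le]
  rintro z (rfl | rfl)
  · refine Ideal.mem_comap.mpr ?_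
    rw [phiA_mk]
    have hY : phi k t (MvPolynomial.X 1) = vY k t := by simp [phi, MvPolynomial.aeval_X]
    rw [hY, Ideal.mem_span_singleton, vY]
    refine ⟨Polynomial.C (LaurentPolynomial.T (-1)) * Polynomial.X ^ (t-1), ?_⟩
    conv_lhs => rw [show t = (t-1)+1 by omega]
    ring
  · refine Ideal.mem_comap.mpr ?_
    rw [phiA_mk]
    have hU : phi k t (MvPolynomial.X 2) = Polynomial.X := by
      simp [phi, vU, MvPolynomial.aeval_X]
    rw [hU]
    exact Ideal.mem_span_singleton.mpr dvd_rfl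

lemma mem_Iyu_of_dvd (ht : 0 < t) {z : Aring k t}
    (h : (Polynomial.X : B k) ∣ phiA k t z) : z ∈ Iyu k t := by
  obtain ⟨c, hc⟩ := exists_NF ht z
  have h0 : ∀ a : ℕ, MvPolynomial.coeff (Finsupp.single 0 a + Finsupp.single 1 0) (c 0) = 0 := by
    intro a
    rw [← coeff_phiA hc a 0 0 ht]
    rw [Polynomial.X_dvd_iff] at h
    simp [h]
  have hc0 : c 0 ∈ Ideal.span {(MvPolynomial.X 1 : MvPolynomial (Fin 2) k)} := by
    have : c 0 ∈ Ideal.span ((fun s => MvPolynomial.monomial s (1:k)) ''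
        {Finsupp.single 1 1}) := by
      rw [MvPolynomial.mem_ideal_span_monomial_image]
      intro m hm
      refine ⟨Finsupp.single 1 1, rfl, ?_⟩
      rw [Finsupp.single_le_iff]
      by_contra hlt
      have h1 : m 1 = 0 := by omega
      have : m = Finsupp.single 0 (m 0) + Finsupp.single 1 0 := by
        conv_lhs => rw [fin2_decomp m]
        rw [h1]
      rw [MvPolynomial.mem_support_iff, this, h0] at hm
      exact hm rfl
    simpa [MvPolynomial.X] using this
  obtain ⟨d, hd⟩ := Ideal.mem_span_singleton'.mp hc0
  rw [hc]
  obtain ⟨t', rfl⟩ : ∃ t', t = t' + 1 := ⟨t - 1, by omega⟩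
  rw [Finset.sum_range_succ']
  refine Ideal.add_mem _ (Ideal.sum_mem _ fun i _ => ?_) ?_
  · rw [pow_succ]
    exact Ideal.mul_mem_left _ _ (Ideal.mul_mem_left _ _
      (Ideal.subset_span (Or.inr rfl)))
  · rw [pow_zero, mul_one, ← hd, map_mul (psiP k),
      map_mul (Ideal.Quotient.mk (relId k (t'+1)))]
    have : Ideal.Quotient.mk (relId k (t'+1)) (psiP k (MvPolynomial.X 1)) = yA k (t'+1) := by
      rw [psiP, MvPolynomial.rename_X]
      rfl
    rw [this]
    exact Ideal.mul_mem_left _ _ (Ideal.subset_span (Or.inl rfl))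

lemma Iyu_eq_comap (ht : 0 < t) :
    Iyu k t = Ideal.comap (phiA k t) (Ideal.span {(Polynomial.X : B k)}) := by
  refine le_antisymm (Iyu_le_comap ht) fun z hz => ?_
  exact mem_Iyu_of_dvd ht (Ideal.mem_span_singleton.mp hz)

lemma spanX_prime : (Ideal.span {(Polynomial.X : B k)}).IsPrime :=
  (Ideal.span_singleton_prime Polynomial.X_ne_zero).mpr Polynomial.prime_X

lemma Iyu_prime (ht : 0 < t) : (Iyu k t).IsPrime := by
  rw [Iyu_eq_comap ht]
  exact Ideal.IsPrime.comap _ (hK := spanX_prime (k := k))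

lemma T_one_ne_zero : (LaurentPolynomial.T 1 : LaurentPolynomial k) ≠ 0 := by
  intro h
  have h2 : ((LaurentPolynomial.T 1 : LaurentPolynomial k)).coeff 1 = 1 := by
    rw [LaurentPolynomial.T_apply]
    simp
  rw [h] at h2
  simp [Finsupp.zero_apply] at h2

lemma xA_not_mem (ht : 0 < t) : xA k t ∉ Iyu k t := by
  rw [Iyu_eq_comap ht, Ideal.mem_comap, xA, phiA_mk]
  have hX : phi k t (MvPolynomial.X 0) = vX k := by simp [phi, MvPolynomial.aeval_X]
  rw [hX, Ideal.mem_span_singleton, vX, Polynomial.X_dvd_iff, Polynomial.coeff_C_zero]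
  exact T_one_ne_zero (k := k)

/-! ### divisibility facts -/

lemma pow_dvd_of_mem_pow (ht : 0 < t) {z : Aring k t} {m : ℕ} (hz : z ∈ Iyu k t ^ m) :
    (Polynomial.X : B k) ^ m ∣ phiA k t z := by
  have h1 : Ideal.map (phiA k t) (Iyu k t ^ m) ≤ Ideal.span {(Polynomial.X : B k)} ^ m := by
    rw [Ideal.map_pow]
    exact Ideal.pow_right_mono (Ideal.map_le_iff_le_comap.mpr (Iyu_le_comap ht)) m
  have h2 := h1 (Ideal.mem_map_of_mem _ hz)
  rw [Ideal.span_singleton_pow, Ideal.mem_span_singleton] at h2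
  exact h2

lemma mem_span_yn (ht : 0 < t) {n : ℕ} {z : Aring k t}
    (h : (Polynomial.X : B k) ^ (t * n) ∣ phiA k t z) :
    z ∈ Ideal.span {yA k t ^ n} := by
  obtain ⟨c, hc⟩ := exists_NF ht z
  have key : ∀ i < t, (c i) ∈ Ideal.span {(MvPolynomial.X 1 : MvPolynomial (Fin 2) k) ^ n} := by
    intro i hi
    have : c i ∈ Ideal.span ((fun s => MvPolynomial.monomial s (1:k)) ''
        {Finsupp.single 1 n}) := by
      rw [MvPolynomial.mem_ideal_span_monomial_image]
      intro m hm
      refine ⟨Finsupp.single 1 n, rfl, ?_⟩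
      rw [Finsupp.single_le_iff]
      by_contra hlt
      push_neg at hlt
      have hco : MvPolynomial.coeff (Finsupp.single 0 (m 0) + Finsupp.single 1 (m 1)) (c i)
          = 0 := by
        rw [← coeff_phiA hc (m 0) (m 1) i hi]
        rw [Polynomial.X_pow_dvd_iff] at h
        have hlt2 : t * m 1 + i < t * n := by
          calc t * m 1 + i < t * m 1 + t := by omega
          _ = t * (m 1 + 1) := by ring
          _ ≤ t * n := Nat.mul_le_mul_left t (by omega)
        simp [h _ hlt2]
      rw [← fin2_decomp m] at hco
      exact (MvPolynomial.mem_support_iff.mp hm) hco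
    simpa [MvPolynomial.X_pow_eq_monomial] using this
  rw [hc]
  refine Ideal.sum_mem _ fun i hi => ?_
  obtain ⟨d, hd⟩ := Ideal.mem_span_singleton'.mp (key i (Finset.mem_range.mp hi))
  rw [← hd, map_mul (psiP k), map_pow (psiP k), map_mul (Ideal.Quotient.mk (relId k t)),
    map_pow (Ideal.Quotient.mk (relId k t))]
  have hy : Ideal.Quotient.mk (relId k t) (psiP k (MvPolynomial.X 1)) = yA k t := by
    rw [psiP, MvPolynomial.rename_X]; rfl
  rw [hy]
  rw [Ideal.mem_span_singleton]
  exact ⟨Ideal.Quotient.mk (relId k t) (psiP k d) * uA k t ^ i, by ring⟩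

/-! ### localization bridge -/

lemma mem_loc {R : Type} [CommRing R] (P : Ideal R) [hP : P.IsPrime] (J : Ideal R) (z : R) :
    z ∈ Ideal.comap (algebraMap R (Localization P.primeCompl))
        (Ideal.map (algebraMap R (Localization P.primeCompl)) J) ↔
      ∃ s ∈ P.primeCompl, s * z ∈ J := by
  rw [Ideal.mem_comap, IsLocalization.mem_map_algebraMap_iff P.primeCompl]
  constructor
  · rintro ⟨⟨⟨a, ha⟩, s⟩, h⟩
    rw [← map_mul] at h
    obtain ⟨c, hc⟩ := (IsLocalization.eq_iff_exists P.primeCompl _).mp h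
    refine ⟨c * s, mul_mem c.2 s.2, ?_⟩
    have he : ((c : R) * (s : R)) * z = (c : R) * a := by
      rw [← hc]; ring
    rw [he]
    exact Ideal.mul_mem_left _ _ ha
  · rintro ⟨s, hs, h⟩
    exact ⟨⟨⟨s * z, h⟩, ⟨s, hs⟩⟩, by rw [← map_mul]; congr 1; ring⟩

end SymbAux

open SymbAux in
/-- Proposition 4.5 (Prop. `prop:symbol`): in `A = k[x,y,u]/⟨x y − u^t⟩`, the ideal
`I = ⟨y, u⟩` is prime, and for `m = t·n` its `m`-th symbolic power (the preimage of
`(I A_I)^m` under the localization map `A → A_I`) equals `⟨y^n⟩`. -/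
theorem symbolic_power_eq (k : Type) [Field k] (t n : ℕ) (ht : 0 < t) (hn : 0 < n) :
    ∃ hI : (Iyu k t).IsPrime,
      Ideal.comap (algebraMap (Aring k t) (Localization (@Ideal.primeCompl _ _ (Iyu k t) hI)))
          ((Ideal.map (algebraMap (Aring k t)
              (Localization (@Ideal.primeCompl _ _ (Iyu k t) hI))) (Iyu k t)) ^ (t * n))
        = Ideal.span {Ideal.Quotient.mk (relId k t) (MvPolynomial.X 1) ^ n} := by
  have hI : (Iyu k t).IsPrime := Iyu_prime ht
  refine ⟨hI, ?_⟩
  ext z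
  rw [← Ideal.map_pow (S := Localization (Iyu k t).primeCompl), mem_loc (Iyu k t)]
  show _ ↔ z ∈ Ideal.span {yA k t ^ n}
  constructor
  · rintro ⟨s, hs, hmem⟩
    have h1 : ¬ (Polynomial.X : B k) ∣ phiA k t s := by
      intro hdvd
      exact hs (mem_Iyu_of_dvd ht hdvd)
    have h2 : (Polynomial.X : B k) ^ (t * n) ∣ phiA k t s * phiA k t z := by
      rw [← map_mul]
      exact pow_dvd_of_mem_pow ht hmem
    exact mem_span_yn ht (Polynomial.prime_X.pow_dvd_of_dvd_mul_left _ h1 h2)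
  · intro hz
    obtain ⟨w, hw⟩ := Ideal.mem_span_singleton'.mp hz
    refine ⟨xA k t ^ n,
      pow_mem (show xA k t ∈ (Iyu k t).primeCompl from xA_not_mem ht) n, ?_⟩
    · rw [← hw]
      have : xA k t ^ n * (w * yA k t ^ n) = w * (uA k t ^ (t * n)) := by
        rw [pow_mul, rel_u_pow k t, mul_pow]; ring
      rw [this]
      have hu : uA k t ∈ Iyu k t := Ideal.subset_span (Set.mem_insert_of_mem _ rfl)
      exact Ideal.mul_mem_left _ _ (Ideal.pow_mem_pow hu (t * n))

end
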